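/- Let n be a nonzero integer, k_1, k_2 \in Z, and let f_1, f_2 be Schwartz functions on R. For j = 1,2 set (i_{n,k_j} f_j)(x,y,z) = \sum_{\ell \in Z, \ell \equiv k_j (mod n)} e(nz + \ell y) f_j(x + \ell/n), a series converging absolutely for each (x,y,z). Then \int_0^1 \int_0^1 \int_0^1 (i_{n,k_1} f_1)(x,y,z) \cdot conj((i_{n,k_2} f_2)(x,y,z)) dx\,dy\,dz equals \int_R f_1(t) conj(f_2(t)) dt if k_1 \equiv k_2 (mod n), and equals 0 if k_1 \not\equiv k_2 (mod n). -/

import Mathlib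

/-- `e(x) = exp(2πix)` -/
noncomputable def e (x : ℝ) : ℂ := Complex.exp (2 * Real.pi * Complex.I * (x : ℂ))

open MeasureTheory Set


lemma e_zero : e 0 = 1 := by simp [e]

lemma e_add (s t : ℝ) : e (s + t) = e s * e t := by
  rw [e, e, e, ← Complex.exp_add]; push_cast; ring_nf

lemma e_norm (t : ℝ) : ‖e t‖ = 1 := by
  rw [e, Complex.norm_exp]
  have : (2 * (Real.pi:ℂ) * Complex.I * (t:ℂ)).re = 0 := by simp
  rw [this, Real.exp_zero]

lemma e_conj (t : ℝ) : (starRingEnd ℂ) (e t) = e (-t) := by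
  rw [e, e, ← Complex.exp_conj]
  congr 1
  simp only [map_mul, Complex.conj_I, Complex.conj_ofReal, map_ofNat, Complex.ofReal_neg]
  ring

lemma e_mul_conj (t : ℝ) : e t * (starRingEnd ℂ) (e t) = 1 := by
  rw [e_conj, ← e_add, add_neg_cancel, e_zero]

lemma continuous_e : Continuous e := by
  unfold e; continuity

lemma integral_e (m : ℤ) : (∫ y in Set.Ioc (0:ℝ) 1, e ((m:ℝ) * y)) = if m = 0 then 1 else 0 := by
  rw [← intervalIntegral.integral_of_le zero_le_one]
  split_ifs with h
  · subst h; simp [e]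
  · have hm : (m:ℂ) ≠ 0 := by exact_mod_cast h
    have hc : 2 * (Real.pi:ℂ) * Complex.I * (m:ℂ) ≠ 0 := by
      simp [Real.pi_ne_zero, Complex.I_ne_zero, hm]
    have heq : ∀ y:ℝ, e ((m:ℝ) * y) = Complex.exp ((2 * (Real.pi:ℂ) * Complex.I * (m:ℂ)) * (y:ℂ)) := by
      intro y; rw [e]; push_cast; ring_nf
    rw [intervalIntegral.integral_congr (g := fun y : ℝ => Complex.exp ((2 * (Real.pi:ℂ) * Complex.I * (m:ℂ)) * (y:ℂ))) (fun y _ => heq y)]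
    rw [integral_exp_mul_complex hc]
    have h1 : (2 * (Real.pi:ℂ) * Complex.I * (m:ℂ)) * ((1:ℝ):ℂ) = (m:ℤ) * (2 * (Real.pi:ℂ) * Complex.I) := by
      push_cast; ring
    rw [h1, Complex.exp_int_mul_two_pi_mul_I]
    simp

lemma schwartz_bound (f : SchwartzMap ℝ ℂ) : ∃ C : ℝ, ∀ t : ℝ, ‖f t‖ ≤ C / (1 + t^2) := by
  obtain ⟨C₀, hC₀, h₀⟩ := f.decay 0 0
  obtain ⟨C₂, hC₂, h₂⟩ := f.decay 2 0
  refine ⟨C₀ + C₂, fun t => ?_⟩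
  have e₀ := h₀ t
  have e₂ := h₂ t
  rw [norm_iteratedFDeriv_zero] at e₀ e₂
  simp only [pow_zero, one_mul] at e₀
  have ht : ‖t‖ ^ 2 = t ^ 2 := by rw [Real.norm_eq_abs, sq_abs]
  rw [ht] at e₂
  rw [le_div_iff₀ (by positivity)]
  nlinarith [norm_nonneg (f t), sq_nonneg t]

lemma summable_inv_one_add_sq (c x : ℝ) (hc : c ≠ 0) :
    Summable fun ℓ : ℤ => 1 / (1 + (x + ℓ * c)^2) := by
  have hc' : 0 < |c| := abs_pos.mpr hc
  set M : ℝ := 2 * |x| / |c| + 1 with hM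
  have hM1 : 1 ≤ M := by
    have h0 : 0 ≤ 2 * |x| / |c| := by positivity
    rw [hM]; linarith
  have hs : Summable fun ℓ : ℤ => (4 / c^2) * (1 / (ℓ:ℝ)^2) :=
    (Real.summable_one_div_int_pow.mpr one_lt_two).mul_left _
  refine Summable.of_norm_bounded_eventually hs ?_
  have hfin : {ℓ : ℤ | ¬ M ≤ |(ℓ:ℝ)|}.Finite := by
    refine (Set.finite_Icc (-⌈M⌉) ⌈M⌉).subset ?_
    intro ℓ hℓ
    simp only [Set.mem_setOf_eq, not_le] at hℓ
    have h1 : |(ℓ:ℝ)| ≤ (⌈M⌉:ℝ) := le_trans hℓ.le (Int.le_ceil M)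
    rw [← Int.cast_abs] at h1
    have h2 : |ℓ| ≤ ⌈M⌉ := by exact_mod_cast h1
    exact Set.mem_Icc.mpr (abs_le.mp h2)
  filter_upwards [Filter.eventually_cofinite.mpr hfin] with ℓ hℓ
  have hl1 : (1:ℝ) ≤ |(ℓ:ℝ)| := le_trans hM1 hℓ
  have hl0 : (ℓ:ℝ) ≠ 0 := by
    intro h; rw [h, abs_zero] at hl1; linarith
  have hu : 2 * |x| + |c| ≤ |(ℓ:ℝ)| * |c| := by
    have := mul_le_mul_of_nonneg_right hℓ (abs_nonneg c)
    have hMc : M * |c| = 2 * |x| + |c| := by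
      rw [hM, add_mul, one_mul, div_mul_cancel₀]
      exact ne_of_gt hc'
    calc 2 * |x| + |c| = M * |c| := hMc.symm
      _ ≤ |(ℓ:ℝ)| * |c| := this
  have habs : |(ℓ:ℝ) * c| - |x| ≤ |x + ℓ * c| := by
    calc |(ℓ:ℝ) * c| - |x| = |(x + ℓ*c) + (-x)| - |x| := by ring_nf
      _ ≤ (|x + ℓ*c| + |(-x)|) - |x| := by gcongr; exact abs_add_le _ _
      _ = |x + ℓ*c| := by rw [abs_neg]; ring
  have hx2 : |x| ≤ |(ℓ:ℝ)| * |c| / 2 := by linarith [abs_nonneg c]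
  have hkey : |(ℓ:ℝ)| * |c| / 2 ≤ |x + ℓ * c| := by
    rw [abs_mul] at habs; linarith
  have hsq : ((ℓ:ℝ) * c)^2 / 4 ≤ (x + ℓ * c)^2 := by
    have h1 : (|(ℓ:ℝ)| * |c| / 2)^2 ≤ |x + ℓ*c|^2 := by
      apply pow_le_pow_left₀ (by positivity) hkey
    rw [sq_abs] at h1
    calc ((ℓ:ℝ)*c)^2/4 = (|(ℓ:ℝ)| * |c| / 2)^2 := by
          rw [div_pow, mul_pow (|(ℓ:ℝ)|) (|c|) 2, sq_abs, sq_abs, mul_pow]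
          norm_num
      _ ≤ _ := h1
  have hnorm : ‖1 / (1 + (x + ℓ*c)^2)‖ = 1 / (1 + (x + ℓ*c)^2) := by
    rw [Real.norm_eq_abs, abs_of_nonneg (by positivity)]
  rw [hnorm]
  rw [div_le_iff₀ (by positivity)]
  have hr : 4 / c^2 * (1/(ℓ:ℝ)^2) = 4 / (c^2 * (ℓ:ℝ)^2) := by field_simp
  rw [hr, div_mul_eq_mul_div, le_div_iff₀ (by positivity)]
  nlinarith [hsq, sq_nonneg ((ℓ:ℝ)*c)]

lemma summable_schwartz (f : SchwartzMap ℝ ℂ) (x d : ℝ) (hd : d ≠ 0) :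
    Summable fun ℓ : ℤ => ‖f (x + (ℓ:ℝ) / d)‖ := by
  obtain ⟨C, hC⟩ := schwartz_bound f
  have hsum := (summable_inv_one_add_sq d⁻¹ x (inv_ne_zero hd)).mul_left C
  refine hsum.of_nonneg_of_le (fun ℓ => norm_nonneg _) (fun ℓ => ?_)
  have : (ℓ:ℝ) / d = ℓ * d⁻¹ := by rw [div_eq_mul_inv]
  rw [this]
  calc ‖f (x + ℓ * d⁻¹)‖ ≤ C / (1 + (x + ℓ * d⁻¹)^2) := hC _
    _ = C * (1 / (1 + (x + ℓ * d⁻¹)^2)) := by ring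

def modEquiv (n k : ℤ) (hn : n ≠ 0) : ℤ ≃ {ℓ : ℤ // ℓ ≡ k [ZMOD n]} where
  toFun m := ⟨k + n * m, Int.modEq_iff_dvd.mpr ⟨-m, by ring⟩⟩
  invFun ℓ := (ℓ.1 - k) / n
  left_inv m := by
    simp [Int.add_mul_ediv_left, Int.mul_ediv_cancel_left _ hn]
  right_inv ℓ := by
    obtain ⟨ℓ, hℓ⟩ := ℓ
    have hdvd : n ∣ ℓ - k := by
      have := Int.ModEq.dvd hℓ
      -- this : n ∣ k - ℓ
      have h2 := dvd_neg.mpr this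
      rwa [neg_sub] at h2
    apply Subtype.ext
    simp only
    rw [Int.mul_ediv_cancel' hdvd]
    ring

lemma translate_integral {E : Type*} [NormedAddCommGroup E] [NormedSpace ℝ E]
    (h : ℝ → E) (a : ℝ) :
    ∫ u in Set.Ioc (0:ℝ) 1, h (u + a) = ∫ t in Set.Ioc a (a+1), h t := by
  have hpre : ((· + a) ⁻¹' Set.Ioc a (a+1)) = Set.Ioc (0:ℝ) 1 := by
    ext u
    simp only [Set.mem_preimage, Set.mem_Ioc]
    constructor <;> intro hh <;> exact ⟨by linarith [hh.1], by linarith [hh.2]⟩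
  have := (measurePreserving_add_right volume a).setIntegral_preimage_emb
    (measurableEmbedding_addRight a) h (Set.Ioc a (a+1))
  rwa [hpre] at this

lemma key_integral (n : ℤ) (hn : n ≠ 0) (k₁ k₂ : ℤ) (f₁ f₂ : SchwartzMap ℝ ℂ) (x : ℝ) :
    (∫ y in (0:ℝ)..1, ∫ z in (0:ℝ)..1,
        (∑' ℓ : {ℓ : ℤ // ℓ ≡ k₁ [ZMOD n]},
            e ((n : ℝ) * z + ((ℓ : ℤ) : ℝ) * y) * f₁ (x + ((ℓ : ℤ) : ℝ) / (n : ℝ))) *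
        (starRingEnd ℂ) (∑' ℓ : {ℓ : ℤ // ℓ ≡ k₂ [ZMOD n]},
            e ((n : ℝ) * z + ((ℓ : ℤ) : ℝ) * y) * f₂ (x + ((ℓ : ℤ) : ℝ) / (n : ℝ))))
    = ∑' p : {ℓ : ℤ // ℓ ≡ k₁ [ZMOD n]} × {ℓ : ℤ // ℓ ≡ k₂ [ZMOD n]},
        if ((p.1 : ℤ)) = ((p.2 : ℤ)) then
          f₁ (x + ((p.1 : ℤ) : ℝ)/(n:ℝ)) * (starRingEnd ℂ) (f₂ (x + ((p.2 : ℤ) : ℝ)/(n:ℝ))) else 0 := by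
  classical
  have hn' : (n:ℝ) ≠ 0 := Int.cast_ne_zero.mpr hn
  have hs₁ : Summable fun ℓ : {ℓ : ℤ // ℓ ≡ k₁ [ZMOD n]} => ‖f₁ (x + ((ℓ:ℤ):ℝ) / (n:ℝ))‖ :=
    Summable.comp_injective (f := fun ℓ : ℤ => ‖f₁ (x + (ℓ:ℝ) / (n:ℝ))‖)
      (summable_schwartz f₁ x ((n:ℤ):ℝ) hn')
      (Subtype.val_injective (p := fun ℓ : ℤ => ℓ ≡ k₁ [ZMOD n]))
  have hs₂ : Summable fun ℓ : {ℓ : ℤ // ℓ ≡ k₂ [ZMOD n]} => ‖f₂ (x + ((ℓ:ℤ):ℝ) / (n:ℝ))‖ :=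
    Summable.comp_injective (f := fun ℓ : ℤ => ‖f₂ (x + (ℓ:ℝ) / (n:ℝ))‖)
      (summable_schwartz f₂ x ((n:ℤ):ℝ) hn')
      (Subtype.val_injective (p := fun ℓ : ℤ => ℓ ≡ k₂ [ZMOD n]))
  -- step Z : the inner z-integral
  have hz : ∀ y : ℝ,
      (∫ z in (0:ℝ)..1,
        (∑' ℓ : {ℓ : ℤ // ℓ ≡ k₁ [ZMOD n]},
            e ((n : ℝ) * z + ((ℓ : ℤ) : ℝ) * y) * f₁ (x + ((ℓ : ℤ) : ℝ) / (n : ℝ))) *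
        (starRingEnd ℂ) (∑' ℓ : {ℓ : ℤ // ℓ ≡ k₂ [ZMOD n]},
            e ((n : ℝ) * z + ((ℓ : ℤ) : ℝ) * y) * f₂ (x + ((ℓ : ℤ) : ℝ) / (n : ℝ))))
      = (∑' ℓ : {ℓ : ℤ // ℓ ≡ k₁ [ZMOD n]}, e (((ℓ:ℤ):ℝ) * y) * f₁ (x + ((ℓ:ℤ):ℝ) / (n:ℝ))) *
        (starRingEnd ℂ) (∑' ℓ : {ℓ : ℤ // ℓ ≡ k₂ [ZMOD n]},
            e (((ℓ:ℤ):ℝ) * y) * f₂ (x + ((ℓ:ℤ):ℝ) / (n:ℝ))) := by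
    intro y
    have hpt : ∀ z : ℝ,
        (∑' ℓ : {ℓ : ℤ // ℓ ≡ k₁ [ZMOD n]},
            e ((n : ℝ) * z + ((ℓ : ℤ) : ℝ) * y) * f₁ (x + ((ℓ : ℤ) : ℝ) / (n : ℝ))) *
        (starRingEnd ℂ) (∑' ℓ : {ℓ : ℤ // ℓ ≡ k₂ [ZMOD n]},
            e ((n : ℝ) * z + ((ℓ : ℤ) : ℝ) * y) * f₂ (x + ((ℓ : ℤ) : ℝ) / (n : ℝ)))
      = (∑' ℓ : {ℓ : ℤ // ℓ ≡ k₁ [ZMOD n]}, e (((ℓ:ℤ):ℝ) * y) * f₁ (x + ((ℓ:ℤ):ℝ) / (n:ℝ))) *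
        (starRingEnd ℂ) (∑' ℓ : {ℓ : ℤ // ℓ ≡ k₂ [ZMOD n]},
            e (((ℓ:ℤ):ℝ) * y) * f₂ (x + ((ℓ:ℤ):ℝ) / (n:ℝ))) := by
      intro z
      have h1 : (∑' ℓ : {ℓ : ℤ // ℓ ≡ k₁ [ZMOD n]},
            e ((n : ℝ) * z + ((ℓ : ℤ) : ℝ) * y) * f₁ (x + ((ℓ : ℤ) : ℝ) / (n : ℝ)))
          = e ((n:ℝ)*z) * ∑' ℓ : {ℓ : ℤ // ℓ ≡ k₁ [ZMOD n]},
              e (((ℓ:ℤ):ℝ) * y) * f₁ (x + ((ℓ:ℤ):ℝ) / (n:ℝ)) := by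
        rw [← tsum_mul_left]
        exact tsum_congr fun ℓ => by rw [e_add, mul_assoc]
      have h2 : (∑' ℓ : {ℓ : ℤ // ℓ ≡ k₂ [ZMOD n]},
            e ((n : ℝ) * z + ((ℓ : ℤ) : ℝ) * y) * f₂ (x + ((ℓ : ℤ) : ℝ) / (n : ℝ)))
          = e ((n:ℝ)*z) * ∑' ℓ : {ℓ : ℤ // ℓ ≡ k₂ [ZMOD n]},
              e (((ℓ:ℤ):ℝ) * y) * f₂ (x + ((ℓ:ℤ):ℝ) / (n:ℝ)) := by
        rw [← tsum_mul_left]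
        exact tsum_congr fun ℓ => by rw [e_add, mul_assoc]
      rw [h1, h2, map_mul]
      have hring : ∀ (u A B : ℂ), (u * A) * ((starRingEnd ℂ) u * B)
          = (u * (starRingEnd ℂ) u) * (A * B) := fun u A B => by ring
      rw [hring, e_mul_conj, one_mul]
    rw [intervalIntegral.integral_congr (g := fun _ =>
      (∑' ℓ : {ℓ : ℤ // ℓ ≡ k₁ [ZMOD n]}, e (((ℓ:ℤ):ℝ) * y) * f₁ (x + ((ℓ:ℤ):ℝ) / (n:ℝ))) *
        (starRingEnd ℂ) (∑' ℓ : {ℓ : ℤ // ℓ ≡ k₂ [ZMOD n]},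
            e (((ℓ:ℤ):ℝ) * y) * f₂ (x + ((ℓ:ℤ):ℝ) / (n:ℝ)))) (fun z _ => hpt z)]
    simp
  -- pointwise product expansion in y
  have hprod : ∀ y : ℝ,
      (∑' ℓ : {ℓ : ℤ // ℓ ≡ k₁ [ZMOD n]}, e (((ℓ:ℤ):ℝ) * y) * f₁ (x + ((ℓ:ℤ):ℝ) / (n:ℝ))) *
        (starRingEnd ℂ) (∑' ℓ : {ℓ : ℤ // ℓ ≡ k₂ [ZMOD n]},
            e (((ℓ:ℤ):ℝ) * y) * f₂ (x + ((ℓ:ℤ):ℝ) / (n:ℝ)))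
      = ∑' p : {ℓ : ℤ // ℓ ≡ k₁ [ZMOD n]} × {ℓ : ℤ // ℓ ≡ k₂ [ZMOD n]},
          e ((((p.1:ℤ) - (p.2:ℤ) : ℤ) : ℝ) * y) *
            (f₁ (x + ((p.1:ℤ):ℝ)/(n:ℝ)) * (starRingEnd ℂ) (f₂ (x + ((p.2:ℤ):ℝ)/(n:ℝ)))) := by
    intro y
    have hA : Summable fun ℓ : {ℓ : ℤ // ℓ ≡ k₁ [ZMOD n]} =>
        ‖e (((ℓ:ℤ):ℝ) * y) * f₁ (x + ((ℓ:ℤ):ℝ) / (n:ℝ))‖ := by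
      simpa only [norm_mul, e_norm, one_mul] using hs₁
    have hB : Summable fun m : {ℓ : ℤ // ℓ ≡ k₂ [ZMOD n]} =>
        ‖(starRingEnd ℂ) (e (((m:ℤ):ℝ) * y) * f₂ (x + ((m:ℤ):ℝ) / (n:ℝ)))‖ := by
      simpa only [RCLike.norm_conj, norm_mul, e_norm, one_mul] using hs₂
    have hconj : (starRingEnd ℂ) (∑' m : {ℓ : ℤ // ℓ ≡ k₂ [ZMOD n]},
          e (((m:ℤ):ℝ) * y) * f₂ (x + ((m:ℤ):ℝ) / (n:ℝ)))
        = ∑' m : {ℓ : ℤ // ℓ ≡ k₂ [ZMOD n]},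
          (starRingEnd ℂ) (e (((m:ℤ):ℝ) * y) * f₂ (x + ((m:ℤ):ℝ) / (n:ℝ))) := by
      simp only [starRingEnd_apply]
      exact tsum_star
    rw [hconj, tsum_mul_tsum_of_summable_norm hA hB]
    refine tsum_congr fun p => ?_
    rw [map_mul, e_conj]
    have harg : (((p.1:ℤ) - (p.2:ℤ) : ℤ) : ℝ) * y = ((p.1:ℤ):ℝ) * y + (-(((p.2:ℤ):ℝ) * y)) := by
      push_cast; ring
    rw [harg, e_add]
    ring
  -- rewrite and swap
  rw [intervalIntegral.integral_congr (g := fun y =>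
      (∑' ℓ : {ℓ : ℤ // ℓ ≡ k₁ [ZMOD n]}, e (((ℓ:ℤ):ℝ) * y) * f₁ (x + ((ℓ:ℤ):ℝ) / (n:ℝ))) *
        (starRingEnd ℂ) (∑' ℓ : {ℓ : ℤ // ℓ ≡ k₂ [ZMOD n]},
            e (((ℓ:ℤ):ℝ) * y) * f₂ (x + ((ℓ:ℤ):ℝ) / (n:ℝ)))) (fun y _ => hz y)]
  rw [intervalIntegral.integral_of_le zero_le_one]
  rw [MeasureTheory.setIntegral_congr_fun measurableSet_Ioc (fun y _ => hprod y)]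
  have hint : ∀ p : {ℓ : ℤ // ℓ ≡ k₁ [ZMOD n]} × {ℓ : ℤ // ℓ ≡ k₂ [ZMOD n]},
      Integrable (fun y : ℝ => e ((((p.1:ℤ) - (p.2:ℤ) : ℤ) : ℝ) * y) *
        (f₁ (x + ((p.1:ℤ):ℝ)/(n:ℝ)) * (starRingEnd ℂ) (f₂ (x + ((p.2:ℤ):ℝ)/(n:ℝ)))))
        (volume.restrict (Set.Ioc (0:ℝ) 1)) := by
    intro p
    have hcont : Continuous (fun y : ℝ => e ((((p.1:ℤ) - (p.2:ℤ) : ℤ) : ℝ) * y) *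
        (f₁ (x + ((p.1:ℤ):ℝ)/(n:ℝ)) * (starRingEnd ℂ) (f₂ (x + ((p.2:ℤ):ℝ)/(n:ℝ))))) :=
      ((continuous_e.comp (continuous_const.mul continuous_id)).mul continuous_const)
    exact hcont.integrableOn_Ioc
  have hCsum : Summable fun p : {ℓ : ℤ // ℓ ≡ k₁ [ZMOD n]} × {ℓ : ℤ // ℓ ≡ k₂ [ZMOD n]} =>
      ‖f₁ (x + ((p.1:ℤ):ℝ)/(n:ℝ)) * (starRingEnd ℂ) (f₂ (x + ((p.2:ℤ):ℝ)/(n:ℝ)))‖ := by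
    have hs₂' : Summable fun m : {ℓ : ℤ // ℓ ≡ k₂ [ZMOD n]} =>
        ‖(starRingEnd ℂ) (f₂ (x + ((m:ℤ):ℝ)/(n:ℝ)))‖ := by
      simpa only [RCLike.norm_conj] using hs₂
    exact Summable.mul_norm (R := ℂ)
      (f := fun ℓ : {ℓ : ℤ // ℓ ≡ k₁ [ZMOD n]} => f₁ (x + ((ℓ:ℤ):ℝ)/(n:ℝ)))
      (g := fun m : {ℓ : ℤ // ℓ ≡ k₂ [ZMOD n]} => (starRingEnd ℂ) (f₂ (x + ((m:ℤ):ℝ)/(n:ℝ))))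
      hs₁ hs₂'
  have hnorms : Summable fun p : {ℓ : ℤ // ℓ ≡ k₁ [ZMOD n]} × {ℓ : ℤ // ℓ ≡ k₂ [ZMOD n]} =>
      ∫ y in Set.Ioc (0:ℝ) 1, ‖e ((((p.1:ℤ) - (p.2:ℤ) : ℤ) : ℝ) * y) *
        (f₁ (x + ((p.1:ℤ):ℝ)/(n:ℝ)) * (starRingEnd ℂ) (f₂ (x + ((p.2:ℤ):ℝ)/(n:ℝ))))‖ := by
    refine hCsum.congr fun p => ?_
    simp only [norm_mul, e_norm, one_mul]
    rw [MeasureTheory.setIntegral_const]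
    simp [Real.volume_Ioc, norm_mul]
  rw [← MeasureTheory.integral_tsum_of_summable_integral_norm hint hnorms]
  refine tsum_congr fun p => ?_
  rw [MeasureTheory.integral_mul_const, integral_e]
  by_cases hpq : ((p.1:ℤ)) = ((p.2:ℤ))
  · rw [if_pos (sub_eq_zero.mpr hpq), if_pos hpq, one_mul]
  · rw [if_neg (fun h => hpq (sub_eq_zero.mp h)), if_neg hpq, zero_mul]

lemma diag_tsum (n : ℤ) (hn : n ≠ 0) (k₁ k₂ : ℤ) (hk : k₁ ≡ k₂ [ZMOD n])
    (f₁ f₂ : SchwartzMap ℝ ℂ) (x : ℝ) :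
    (∑' p : {ℓ : ℤ // ℓ ≡ k₁ [ZMOD n]} × {ℓ : ℤ // ℓ ≡ k₂ [ZMOD n]},
        if ((p.1 : ℤ)) = ((p.2 : ℤ)) then
          f₁ (x + ((p.1 : ℤ) : ℝ)/(n:ℝ)) * (starRingEnd ℂ) (f₂ (x + ((p.2 : ℤ) : ℝ)/(n:ℝ))) else 0)
    = ∑' m : ℤ, (f₁ (x + ((k₁:ℝ)/(n:ℝ) + (m:ℝ))) *
        (starRingEnd ℂ) (f₂ (x + ((k₁:ℝ)/(n:ℝ) + (m:ℝ))))) := by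
  classical
  have hstep1 : (∑' p : {ℓ : ℤ // ℓ ≡ k₁ [ZMOD n]} × {ℓ : ℤ // ℓ ≡ k₂ [ZMOD n]},
        if ((p.1 : ℤ)) = ((p.2 : ℤ)) then
          f₁ (x + ((p.1 : ℤ) : ℝ)/(n:ℝ)) * (starRingEnd ℂ) (f₂ (x + ((p.2 : ℤ) : ℝ)/(n:ℝ))) else 0)
      = ∑' ℓ : {ℓ : ℤ // ℓ ≡ k₁ [ZMOD n]},
          f₁ (x + ((ℓ:ℤ):ℝ)/(n:ℝ)) * (starRingEnd ℂ) (f₂ (x + ((ℓ:ℤ):ℝ)/(n:ℝ))) := by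
    set F : {ℓ : ℤ // ℓ ≡ k₁ [ZMOD n]} × {ℓ : ℤ // ℓ ≡ k₂ [ZMOD n]} → ℂ := fun p =>
      if ((p.1 : ℤ)) = ((p.2 : ℤ)) then
        f₁ (x + ((p.1 : ℤ) : ℝ)/(n:ℝ)) * (starRingEnd ℂ) (f₂ (x + ((p.2 : ℤ) : ℝ)/(n:ℝ))) else 0
      with hF
    set emb : {ℓ : ℤ // ℓ ≡ k₁ [ZMOD n]} →
        {ℓ : ℤ // ℓ ≡ k₁ [ZMOD n]} × {ℓ : ℤ // ℓ ≡ k₂ [ZMOD n]} :=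
      fun ℓ => (ℓ, ⟨ℓ.1, ℓ.2.trans hk⟩) with hemb
    have hinj : Function.Injective emb := fun a b h => (Prod.ext_iff.mp h).1
    have hsupp : Function.support F ⊆ Set.range emb := by
      rintro ⟨p₁, p₂⟩ hp
      by_cases hc : ((p₁ : ℤ)) = ((p₂ : ℤ))
      · exact ⟨p₁, by rw [hemb]; exact congrArg (Prod.mk p₁) (Subtype.ext hc)⟩
      · exact absurd (if_neg hc) hp
    have heq := hinj.tsum_eq (f := F) hsupp
    rw [← heq]
    refine tsum_congr fun ℓ => ?_
    rw [hF, hemb]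
    simp
  rw [hstep1, ← (modEquiv n k₁ hn).tsum_eq]
  refine tsum_congr fun m => ?_
  have harg : x + (((modEquiv n k₁ hn m : ℤ)):ℝ)/(n:ℝ) = x + ((k₁:ℝ)/(n:ℝ) + (m:ℝ)) := by
    have : ((modEquiv n k₁ hn m : ℤ)) = k₁ + n * m := rfl
    rw [this]
    have hn' : (n:ℝ) ≠ 0 := Int.cast_ne_zero.mpr hn
    push_cast
    field_simp
  rw [harg]

lemma integral_periodization (g : ℝ → ℂ) (hg : MeasureTheory.Integrable g) (c₀ : ℝ) :
    ∫ x in Set.Ioc (0:ℝ) 1, ∑' m : ℤ, g (x + (c₀ + (m:ℝ))) = ∫ t, g t := by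
  have hdisj : Pairwise (Function.onFun Disjoint fun m : ℤ => Set.Ioc (c₀ + (m:ℝ)) (c₀ + (m:ℝ) + 1)) := by
    intro i j hij
    rcases lt_or_gt_of_ne hij with h | h
    · have h' : (i:ℝ) + 1 ≤ (j:ℝ) := by exact_mod_cast Int.add_one_le_iff.mpr h
      refine Set.Ioc_disjoint_Ioc.mpr ?_
      calc min (c₀ + (i:ℝ) + 1) (c₀ + (j:ℝ) + 1) ≤ c₀ + (i:ℝ) + 1 := min_le_left _ _
        _ ≤ c₀ + (j:ℝ) := by linarith
        _ ≤ max (c₀ + (i:ℝ)) (c₀ + (j:ℝ)) := le_max_right _ _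
    · have h' : (j:ℝ) + 1 ≤ (i:ℝ) := by exact_mod_cast Int.add_one_le_iff.mpr h
      refine Set.Ioc_disjoint_Ioc.mpr ?_
      calc min (c₀ + (i:ℝ) + 1) (c₀ + (j:ℝ) + 1) ≤ c₀ + (j:ℝ) + 1 := min_le_right _ _
        _ ≤ c₀ + (i:ℝ) := by linarith
        _ ≤ max (c₀ + (i:ℝ)) (c₀ + (j:ℝ)) := le_max_left _ _
  have hunion : (⋃ m : ℤ, Set.Ioc (c₀ + (m:ℝ)) (c₀ + (m:ℝ) + 1)) = Set.univ :=
    iUnion_Ioc_add_intCast c₀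
  have hHS : HasSum (fun m : ℤ => ∫ t in Set.Ioc (c₀ + (m:ℝ)) (c₀ + (m:ℝ) + 1), g t)
      (∫ t, g t) := by
    have := MeasureTheory.hasSum_integral_iUnion (fun m : ℤ => measurableSet_Ioc) hdisj
      (by rw [hunion]; exact hg.integrableOn)
    rwa [hunion, MeasureTheory.Measure.restrict_univ] at this
  have hHSn : HasSum (fun m : ℤ => ∫ t in Set.Ioc (c₀ + (m:ℝ)) (c₀ + (m:ℝ) + 1), ‖g t‖)
      (∫ t, ‖g t‖) := by
    have := MeasureTheory.hasSum_integral_iUnion (fun m : ℤ => measurableSet_Ioc) hdisj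
      (by rw [hunion]; exact hg.norm.integrableOn)
    rwa [hunion, MeasureTheory.Measure.restrict_univ] at this
  have hint : ∀ m : ℤ, MeasureTheory.Integrable (fun x : ℝ => g (x + (c₀ + (m:ℝ))))
      (volume.restrict (Set.Ioc (0:ℝ) 1)) := fun m =>
    (MeasurePreserving.integrable_comp_emb (measurePreserving_add_right volume _)
      (measurableEmbedding_addRight _) |>.mpr hg).integrableOn
  have hsum : Summable fun m : ℤ => ∫ x in Set.Ioc (0:ℝ) 1, ‖g (x + (c₀ + (m:ℝ)))‖ :=
    hHSn.summable.congr fun m => (translate_integral (fun t => ‖g t‖) (c₀ + (m:ℝ))).symm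
  rw [← MeasureTheory.integral_tsum_of_summable_integral_norm hint hsum]
  rw [← hHS.tsum_eq]
  exact tsum_congr fun m => translate_integral g (c₀ + (m:ℝ))

theorem heisenberg_model_orthogonality (n : ℤ) (hn : n ≠ 0) (k₁ k₂ : ℤ)
    (f₁ f₂ : SchwartzMap ℝ ℂ) :
    (∀ x y z : ℝ,
      Summable (fun ℓ : {ℓ : ℤ // ℓ ≡ k₁ [ZMOD n]} =>
        ‖e ((n : ℝ) * z + ((ℓ : ℤ) : ℝ) * y) * f₁ (x + ((ℓ : ℤ) : ℝ) / (n : ℝ))‖) ∧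
      Summable (fun ℓ : {ℓ : ℤ // ℓ ≡ k₂ [ZMOD n]} =>
        ‖e ((n : ℝ) * z + ((ℓ : ℤ) : ℝ) * y) * f₂ (x + ((ℓ : ℤ) : ℝ) / (n : ℝ))‖)) ∧
    (k₁ ≡ k₂ [ZMOD n] →
      (∫ x in (0:ℝ)..1, ∫ y in (0:ℝ)..1, ∫ z in (0:ℝ)..1,
        (∑' ℓ : {ℓ : ℤ // ℓ ≡ k₁ [ZMOD n]},
            e ((n : ℝ) * z + ((ℓ : ℤ) : ℝ) * y) * f₁ (x + ((ℓ : ℤ) : ℝ) / (n : ℝ))) *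
        (starRingEnd ℂ) (∑' ℓ : {ℓ : ℤ // ℓ ≡ k₂ [ZMOD n]},
            e ((n : ℝ) * z + ((ℓ : ℤ) : ℝ) * y) * f₂ (x + ((ℓ : ℤ) : ℝ) / (n : ℝ))))
        = ∫ t : ℝ, f₁ t * (starRingEnd ℂ) (f₂ t)) ∧
    (¬ k₁ ≡ k₂ [ZMOD n] →
      (∫ x in (0:ℝ)..1, ∫ y in (0:ℝ)..1, ∫ z in (0:ℝ)..1,
        (∑' ℓ : {ℓ : ℤ // ℓ ≡ k₁ [ZMOD n]},
            e ((n : ℝ) * z + ((ℓ : ℤ) : ℝ) * y) * f₁ (x + ((ℓ : ℤ) : ℝ) / (n : ℝ))) *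
        (starRingEnd ℂ) (∑' ℓ : {ℓ : ℤ // ℓ ≡ k₂ [ZMOD n]},
            e ((n : ℝ) * z + ((ℓ : ℤ) : ℝ) * y) * f₂ (x + ((ℓ : ℤ) : ℝ) / (n : ℝ))))
        = 0) := by
  classical
  have hn' : (n:ℝ) ≠ 0 := Int.cast_ne_zero.mpr hn
  have hg : MeasureTheory.Integrable (fun t : ℝ => f₁ t * (starRingEnd ℂ) (f₂ t)) := by
    have hb : ∃ C, ∀ t : ℝ, ‖(starRingEnd ℂ) (f₂ t)‖ ≤ C := by
      obtain ⟨C, hC0, hC⟩ := f₂.decay 0 0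
      refine ⟨C, fun t => ?_⟩
      have := hC t
      rw [norm_iteratedFDeriv_zero] at this
      simpa [RCLike.norm_conj] using this
    have hmeas : MeasureTheory.AEStronglyMeasurable (fun t : ℝ => (starRingEnd ℂ) (f₂ t))
        volume := (continuous_star.comp f₂.continuous).aestronglyMeasurable
    have h := MeasureTheory.Integrable.bdd_mul (f₁.integrable) hmeas (Filter.Eventually.of_forall hb.choose_spec)
    have hfun : (fun t : ℝ => (starRingEnd ℂ) (f₂ t) * f₁ t)
        = fun t => f₁ t * (starRingEnd ℂ) (f₂ t) := funext fun t => mul_comm _ _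
    rwa [hfun] at h
  refine ⟨?_, ?_, ?_⟩
  · intro x y z
    constructor
    · have h := Summable.comp_injective (f := fun ℓ : ℤ => ‖f₁ (x + (ℓ:ℝ) / (n:ℝ))‖)
        (summable_schwartz f₁ x ((n:ℤ):ℝ) hn')
        (Subtype.val_injective (p := fun ℓ : ℤ => ℓ ≡ k₁ [ZMOD n]))
      simp only [norm_mul, e_norm, one_mul]
      exact h
    · have h := Summable.comp_injective (f := fun ℓ : ℤ => ‖f₂ (x + (ℓ:ℝ) / (n:ℝ))‖)
        (summable_schwartz f₂ x ((n:ℤ):ℝ) hn')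
        (Subtype.val_injective (p := fun ℓ : ℤ => ℓ ≡ k₂ [ZMOD n]))
      simp only [norm_mul, e_norm, one_mul]
      exact h
  · intro hk
    rw [intervalIntegral.integral_of_le zero_le_one,
      MeasureTheory.setIntegral_congr_fun measurableSet_Ioc
        (fun x _ => (key_integral n hn k₁ k₂ f₁ f₂ x).trans (diag_tsum n hn k₁ k₂ hk f₁ f₂ x))]
    exact integral_periodization _ hg _
  · intro hk
    have hzero : ∀ x : ℝ,
        (∑' p : {ℓ : ℤ // ℓ ≡ k₁ [ZMOD n]} × {ℓ : ℤ // ℓ ≡ k₂ [ZMOD n]},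
          if ((p.1 : ℤ)) = ((p.2 : ℤ)) then
            f₁ (x + ((p.1 : ℤ) : ℝ)/(n:ℝ)) * (starRingEnd ℂ) (f₂ (x + ((p.2 : ℤ) : ℝ)/(n:ℝ)))
          else 0) = 0 := by
      intro x
      have hterm : ∀ p : {ℓ : ℤ // ℓ ≡ k₁ [ZMOD n]} × {ℓ : ℤ // ℓ ≡ k₂ [ZMOD n]},
          (if ((p.1 : ℤ)) = ((p.2 : ℤ)) then
            f₁ (x + ((p.1 : ℤ) : ℝ)/(n:ℝ)) * (starRingEnd ℂ) (f₂ (x + ((p.2 : ℤ) : ℝ)/(n:ℝ)))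
          else 0) = 0 := by
        intro p
        rw [if_neg]
        intro h
        exact hk (p.1.2.symm.trans (by rw [h]; exact p.2.2))
      rw [tsum_congr hterm, tsum_zero]
    rw [intervalIntegral.integral_of_le zero_le_one,
      MeasureTheory.setIntegral_congr_fun measurableSet_Ioc
        (fun x _ => (key_integral n hn k₁ k₂ f₁ f₂ x).trans (hzero x))]
    simp
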